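/- Let X be a real Banach space, q ∈ [1,∞), and suppose X has property (m_q*). Suppose moreover that there exists a sequence (e_n*) in X* with ‖e_n*‖ = 1 for all n that converges to 0 in the weak* topology. Then for every ε ∈ (0,2), (1 − (ε/2)^q)^{1/q} · B_{X*} ⊆ s_ε B_{X*}, i.e. every x* ∈ X* with ‖x*‖ ≤ (1 − (ε/2)^q)^{1/q} belongs to s_ε B_{X*}. -/

import Mathlib

open Filter Topology Metric

/-- The ε-Szlenk derivation of the closed dual unit ball of `X`. -/
def szlenkDeriv (X : Type*) [NormedAddCommGroup X] [NormedSpace ℝ X] (ε : ℝ) :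
    Set (StrongDual ℝ X) :=
  {x : StrongDual ℝ X | ‖x‖ ≤ 1 ∧
    ∀ V : Set (StrongDual ℝ X),
      IsOpen ((StrongDual.toWeakDual '' V : Set (WeakDual ℝ X))) → x ∈ V →
        ε < Metric.diam (Metric.closedBall (0 : StrongDual ℝ X) 1 ∩ V)}

/-- A sequence in the dual is weak*-null if it tends to `0` in the weak* topology. -/
def WeakStarNull {X : Type*} [NormedAddCommGroup X] [NormedSpace ℝ X]
    (u : ℕ → StrongDual ℝ X) : Prop :=
  Filter.Tendsto (fun n => StrongDual.toWeakDual (u n)) Filter.atTop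
    (nhds (0 : WeakDual ℝ X))


/-- Kalton–Werner property (m_q*). -/
def PropmqStar (X : Type*) [NormedAddCommGroup X] [NormedSpace ℝ X] (q : ℝ) : Prop :=
  ∀ x : StrongDual ℝ X, ∀ u : ℕ → StrongDual ℝ X, WeakStarNull u →
    Filter.limsup (fun n => ‖x + u n‖) Filter.atTop
      = (‖x‖ ^ q + (Filter.limsup (fun n => ‖u n‖) Filter.atTop) ^ q) ^ (1 / q)

lemma smul_weakStarNull {X : Type*} [NormedAddCommGroup X] [NormedSpace ℝ X]
    (u : ℕ → StrongDual ℝ X) (h : WeakStarNull u) (t : ℝ) :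
    WeakStarNull (fun n => t • u n) := by
  unfold WeakStarNull at *
  have : (fun n => StrongDual.toWeakDual (t • u n))
      = fun n => t • StrongDual.toWeakDual (u n) := by
    funext n; exact map_smul _ _ _
  rw [this]
  have h2 := h.const_smul t
  rwa [smul_zero] at h2

set_option maxHeartbeats 1000000 in
theorem ball_subset_szlenkDeriv_of_propmqStar (X : Type*) [NormedAddCommGroup X]
    [NormedSpace ℝ X] [CompleteSpace X]
    (q : ℝ) (hq : 1 ≤ q) (hmq : PropmqStar X q)
    (e : ℕ → StrongDual ℝ X) (he : ∀ n, ‖e n‖ = 1) (hnull : WeakStarNull e)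
    (ε : ℝ) (hε : ε ∈ Set.Ioo (0 : ℝ) 2) :
    ∀ x : StrongDual ℝ X, ‖x‖ ≤ (1 - (ε / 2) ^ q) ^ (1 / q) →
      x ∈ szlenkDeriv X ε := by
  intro x hx
  obtain ⟨hε0, hε2⟩ := hε
  have hq0 : 0 < q := lt_of_lt_of_le one_pos hq
  have hhalf0 : 0 < ε / 2 := by linarith
  have hhalf1 : ε / 2 < 1 := by linarith
  have hpow : (ε / 2) ^ q < 1 := Real.rpow_lt_one hhalf0.le hhalf1 hq0
  have hpow0 : 0 < (ε / 2) ^ q := Real.rpow_pos_of_pos hhalf0 q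
  have hbase : 0 < 1 - (ε / 2) ^ q := by linarith
  have hbound_le_one : (1 - (ε / 2) ^ q) ^ (1 / q) ≤ 1 :=
    Real.rpow_le_one hbase.le (by linarith) (by positivity)
  have hbound_pos : 0 < (1 - (ε / 2) ^ q) ^ (1 / q) := Real.rpow_pos_of_pos hbase _
  refine ⟨hx.trans hbound_le_one, ?_⟩
  intro V hV hxV
  -- V is open in the norm topology
  have hVeq : V = StrongDual.toWeakDual ⁻¹' (StrongDual.toWeakDual '' V) := by
    rw [Set.preimage_image_eq _ (StrongDual.toWeakDual (𝕜 := ℝ) (E := X)).injective]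
  have hVopen : IsOpen V := by
    rw [hVeq]
    exact hV.preimage NormedSpace.Dual.toWeakDual_continuous
  obtain ⟨δ, hδ, hball⟩ := Metric.isOpen_iff.mp hVopen x hxV
  obtain ⟨x', hx'V, hx'lt⟩ :
      ∃ x', x' ∈ V ∧ ‖x'‖ < (1 - (ε / 2) ^ q) ^ (1 / q) := by
    set η : ℝ := min (1 / 2) (δ / 2) with hη
    have hη0 : 0 < η := lt_min (by norm_num) (by linarith)
    have hη1 : η < 1 := lt_of_le_of_lt (min_le_left _ _) (by norm_num)
    refine ⟨(1 - η) • x, hball ?_, ?_⟩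
    · rw [Metric.mem_ball, dist_eq_norm]
      rw [show (1 - η) • x - x = (-η) • x by module, norm_smul,
        Real.norm_eq_abs, abs_neg, abs_of_pos hη0]
      calc η * ‖x‖ ≤ η * 1 := by
            have : ‖x‖ ≤ 1 := hx.trans hbound_le_one
            nlinarith
        _ ≤ δ / 2 := by rw [mul_one, hη]; exact min_le_right _ _
        _ < δ := by linarith
    · rw [norm_smul, Real.norm_eq_abs, abs_of_pos (by linarith : (0:ℝ) < 1 - η)]
      calc (1 - η) * ‖x‖ ≤ (1 - η) * (1 - (ε / 2) ^ q) ^ (1 / q) := by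
            nlinarith [norm_nonneg x]
        _ < 1 * (1 - (ε / 2) ^ q) ^ (1 / q) := by nlinarith
        _ = _ := one_mul _
  have hinv : ∀ a : ℝ, 0 ≤ a → (a ^ (1 / q)) ^ q = a := fun a ha => by
    rw [one_div]; exact Real.rpow_inv_rpow ha (ne_of_gt hq0)
  have hinv' : ∀ a : ℝ, 0 ≤ a → (a ^ q) ^ (1 / q) = a := fun a ha => by
    rw [one_div]; exact Real.rpow_rpow_inv ha (ne_of_gt hq0)
  -- choose t with ε/2 < t and ‖x'‖^q + t^q < 1
  set A : ℝ := ‖x'‖ ^ q with hA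
  have hA0 : 0 ≤ A := Real.rpow_nonneg (norm_nonneg _) q
  have hAlt : A < 1 - (ε / 2) ^ q := by
    have := Real.rpow_lt_rpow (norm_nonneg x') hx'lt hq0
    rwa [hinv _ hbase.le] at this
  set s : ℝ := (1 - A) ^ (1 / q) with hs
  have hs_gt : ε / 2 < s := by
    have h1 : (ε / 2) ^ q < 1 - A := by linarith
    have := Real.rpow_lt_rpow (le_of_lt hpow0) h1 (by positivity : (0:ℝ) < 1 / q)
    rwa [hinv' _ hhalf0.le, ← hs] at this
  set t : ℝ := (ε / 2 + s) / 2 with ht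
  have ht_gt : ε / 2 < t := by rw [ht]; linarith
  have ht_lt : t < s := by rw [ht]; linarith
  have ht0 : 0 < t := lt_trans hhalf0 ht_gt
  have htq : A + t ^ q < 1 := by
    have h1 : t ^ q < s ^ q := Real.rpow_lt_rpow ht0.le ht_lt hq0
    have h2 : s ^ q = 1 - A := by
      rw [hs, hinv _ (by linarith : (0:ℝ) ≤ 1 - A)]
    linarith
  have hkey : (A + t ^ q) ^ (1 / q) < 1 :=
    Real.rpow_lt_one (by positivity) htq (by positivity)
  -- limsup of the norms of t • e n
  have hnorm_const : ∀ (c : ℝ), (fun n => ‖c • e n‖) = fun _ => |c| := by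
    intro c; funext n; rw [norm_smul, he n, mul_one, Real.norm_eq_abs]
  have hlimsup : ∀ (c : ℝ), Filter.limsup (fun n => ‖c • e n‖) Filter.atTop = |c| := by
    intro c; rw [hnorm_const c]; exact limsup_const _
  -- apply (m_q*) to x' with ±t • e n
  have hplus := hmq x' (fun n => t • e n) (smul_weakStarNull e hnull t)
  have hminus := hmq x' (fun n => (-t) • e n) (smul_weakStarNull e hnull (-t))
  rw [hlimsup t, abs_of_pos ht0] at hplus
  rw [hlimsup (-t), abs_neg, abs_of_pos ht0] at hminus
  have hbd : ∀ (c : ℝ), Filter.IsBoundedUnder (· ≤ ·) Filter.atTop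
      (fun n => ‖x' + c • e n‖) := by
    intro c
    refine Filter.isBoundedUnder_of ⟨‖x'‖ + |c|, fun n => ?_⟩
    calc ‖x' + c • e n‖ ≤ ‖x'‖ + ‖c • e n‖ := norm_add_le _ _
      _ = ‖x'‖ + |c| := by rw [norm_smul, he n, mul_one, Real.norm_eq_abs]
  have ev1 : ∀ᶠ n in Filter.atTop, ‖x' + t • e n‖ < 1 := by
    refine Filter.eventually_lt_of_limsup_lt ?_ (hbd t)
    rw [hplus]; exact hkey
  have ev2 : ∀ᶠ n in Filter.atTop, ‖x' + (-t) • e n‖ < 1 := by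
    refine Filter.eventually_lt_of_limsup_lt ?_ (hbd (-t))
    rw [hminus]; exact hkey
  -- weak* convergence of x' ± t • e n to x', hence eventual membership in V
  have hmemV : ∀ (c : ℝ), ∀ᶠ n in Filter.atTop, x' + c • e n ∈ V := by
    intro c
    have htend : Filter.Tendsto (fun n => StrongDual.toWeakDual (x' + c • e n))
        Filter.atTop (nhds (StrongDual.toWeakDual x')) := by
      have h1 : (fun n => StrongDual.toWeakDual (x' + c • e n))
          = fun n => StrongDual.toWeakDual x'
              + c • StrongDual.toWeakDual (e n) := by
        funext n; rw [map_add, map_smul]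
      rw [h1]
      have h2 : Filter.Tendsto (fun n => c • StrongDual.toWeakDual (e n))
          Filter.atTop (nhds (0 : WeakDual ℝ X)) := by
        have h3 := hnull.const_smul c
        rwa [smul_zero] at h3
      have h4 := (tendsto_const_nhds
        (x := StrongDual.toWeakDual x') (f := Filter.atTop (α := ℕ))).add h2
      rwa [add_zero] at h4
    have hmem : StrongDual.toWeakDual x' ∈ StrongDual.toWeakDual '' V :=
      ⟨x', hx'V, rfl⟩
    have := htend.eventually (hV.mem_nhds hmem)
    filter_upwards [this] with n hn
    obtain ⟨y, hyV, hy⟩ := hn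
    rwa [← (StrongDual.toWeakDual (𝕜 := ℝ) (E := X)).injective hy]
  obtain ⟨n, h1, h2, h3, h4⟩ := (ev1.and (ev2.and ((hmemV t).and (hmemV (-t))))).exists
  -- the two points
  set p := x' + t • e n
  set m := x' + (-t) • e n
  have hpmem : p ∈ Metric.closedBall (0 : StrongDual ℝ X) 1 ∩ V :=
    ⟨by simpa [Metric.mem_closedBall, dist_zero_right] using h1.le, h3⟩
  have hmmem : m ∈ Metric.closedBall (0 : StrongDual ℝ X) 1 ∩ V :=
    ⟨by simpa [Metric.mem_closedBall, dist_zero_right] using h2.le, h4⟩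
  have hdist : dist p m = 2 * t := by
    rw [dist_eq_norm]
    have : p - m = (2 * t) • e n := by
      show (x' + t • e n) - (x' + (-t) • e n) = (2 * t) • e n
      module
    rw [this, norm_smul, he n, mul_one, Real.norm_eq_abs, abs_of_pos (by linarith)]
  calc ε < 2 * t := by linarith
    _ = dist p m := hdist.symm
    _ ≤ _ := Metric.dist_le_diam_of_mem
        (Metric.isBounded_closedBall.subset Set.inter_subset_left) hpmem hmmem
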